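/- Let X be a profinite group, Y a closed normal subgroup of X, and Σ a finite simple group. If Σ occurs in X (i.e., there exist closed subgroups X₂ ⊴ X₁ ≤ X with X₁/X₂ ≅ Σ), then Σ occurs in Y or Σ occurs in X/Y. -/

import Mathlib

/-- A finite simple group `S` *occurs* in a topological group `G` if there exist closed
subgroups `G₂ ⊴ G₁ ≤ G` with `G₁ ⧸ G₂ ≅ S`. -/
def OccursIn (S : Type*) [Group S] (G : Type*) [Group G] [TopologicalSpace G] : Prop :=
  ∃ (G₁ G₂ : Subgroup G) (_ : IsClosed (G₁ : Set G)) (_ : IsClosed (G₂ : Set G)) (_ : G₂ ≤ G₁)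
    (hnorm : (G₂.subgroupOf G₁).Normal),
      letI := hnorm
      Nonempty ((G₁ ⧸ G₂.subgroupOf G₁) ≃* S)

/-- If `X` is a profinite group, `Y` a closed normal subgroup, and the finite simple group `S`
occurs in `X`, then `S` occurs in `Y` or in `X ⧸ Y`. -/
theorem occursIn_or_of_closed_normal
    {X : Type*} [Group X] [TopologicalSpace X] [IsTopologicalGroup X]
    [CompactSpace X] [TotallyDisconnectedSpace X] [T2Space X]
    {S : Type*} [Group S] [Finite S] (hS : IsSimpleGroup S)
    (Y : Subgroup X) (hn : Y.Normal) (hcl : IsClosed (Y : Set X))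
    (h : OccursIn S X) : OccursIn S Y ∨ OccursIn S (X ⧸ Y) := by
  obtain ⟨X₁, X₂, hc1, hc2, hle, hnorm, ⟨e⟩⟩ := h
  haveI := hnorm
  haveI := hS
  haveI : Nontrivial (X₁ ⧸ X₂.subgroupOf X₁) := e.toEquiv.nontrivial
  haveI hQ : IsSimpleGroup (X₁ ⧸ X₂.subgroupOf X₁) :=
    IsSimpleGroup.isSimpleGroup_of_surjective e.symm.toMonoidHom e.symm.surjective
  -- the image of `Y ∩ X₁` in the simple quotient is trivial or everything
  have hNnorm : ((Y.subgroupOf X₁).map (QuotientGroup.mk' (X₂.subgroupOf X₁))).Normal :=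
    (hn.subgroupOf X₁).map _ (QuotientGroup.mk'_surjective _)
  rcases hNnorm.eq_bot_or_eq_top with hbot | htop
  · -- `Y ∩ X₁ ≤ X₂`; `S` occurs in `X ⧸ Y`
    right
    have hYX₂ : Y.subgroupOf X₁ ≤ X₂.subgroupOf X₁ := by
      have := (Subgroup.map_eq_bot_iff _).mp hbot
      rwa [QuotientGroup.ker_mk'] at this
    haveI := hcl
    haveI : T2Space (X ⧸ Y) := inferInstance
    set π : X →* X ⧸ Y := QuotientGroup.mk' Y with hπ
    have hπc : Continuous π := continuous_quot_mk
    set G₁ : Subgroup (X ⧸ Y) := X₁.map π with hG₁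
    set G₂ : Subgroup (X ⧸ Y) := X₂.map π with hG₂
    have hnrm : (G₂.subgroupOf G₁).Normal := by
      constructor
      rintro n hn2 g
      obtain ⟨a, ha1, ha2⟩ := g.2
      obtain ⟨b, hb1, hb2⟩ := hn2
      refine ⟨a * b * a⁻¹, ?_, ?_⟩
      · exact hnorm.conj_mem ⟨b, hle hb1⟩ hb1 ⟨a, ha1⟩
      · rw [map_mul, map_mul, map_inv, ha2, hb2]
        rfl
    refine ⟨G₁, G₂, ?_, ?_, Subgroup.map_mono hle, hnrm, ?_⟩
    · rw [hG₁, Subgroup.coe_map]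
      exact (hc1.isCompact.image hπc).isClosed
    · rw [hG₂, Subgroup.coe_map]
      exact (hc2.isCompact.image hπc).isClosed
    · haveI := hnrm
      set f : X₁ →* G₁ :=
        MonoidHom.mk' (fun x => ⟨π x, ⟨x, x.2, rfl⟩⟩)
          (fun a b => by ext; simp) with hf
      set ψ : X₁ →* G₁ ⧸ G₂.subgroupOf G₁ := (QuotientGroup.mk' (G₂.subgroupOf G₁)).comp f
        with hψ
      have hsurj : Function.Surjective ψ := by
        intro q
        obtain ⟨g, rfl⟩ := QuotientGroup.mk'_surjective (G₂.subgroupOf G₁) q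
        obtain ⟨a, ha1, ha2⟩ := g.2
        refine ⟨⟨a, ha1⟩, ?_⟩
        have : f ⟨a, ha1⟩ = g := Subtype.ext ha2
        simp [hψ, this]
      have hker : ψ.ker = X₂.subgroupOf X₁ := by
        ext x
        simp only [hψ, MonoidHom.mem_ker, MonoidHom.comp_apply, QuotientGroup.mk'_apply,
          QuotientGroup.eq_one_iff]
        constructor
        · intro hx
          have : π (x : X) ∈ G₂ := hx
          obtain ⟨b, hb1, hb2⟩ := this
          have hxY : (⟨b, hle hb1⟩ : X₁)⁻¹ * x ∈ Y.subgroupOf X₁ := by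
            have : (b : X)⁻¹ * (x : X) ∈ Y := by
              rw [hπ] at hb2
              exact (QuotientGroup.eq).mp hb2
            exact this
          have hxX₂ : (⟨b, hle hb1⟩ : X₁)⁻¹ * x ∈ X₂.subgroupOf X₁ := hYX₂ hxY
          have : (b : X)⁻¹ * (x : X) ∈ X₂ := hxX₂
          have := X₂.mul_mem hb1 this
          rwa [← mul_assoc, mul_inv_cancel, one_mul] at this
        · intro hx
          exact ⟨x, hx, rfl⟩
      exact ⟨((QuotientGroup.quotientMulEquivOfEq hker.symm).trans
        (QuotientGroup.quotientKerEquivOfSurjective ψ hsurj)).symm.trans e⟩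
  · -- `X₂ (Y ∩ X₁) = X₁`; `S` occurs in `Y`
    left
    set G₁ : Subgroup Y := X₁.subgroupOf Y with hG₁
    set G₂ : Subgroup Y := X₂.subgroupOf Y with hG₂
    have hnrm : (G₂.subgroupOf G₁).Normal := by
      constructor
      rintro n hn2 g
      have : (⟨(g : Y), g.2⟩ : X₁) * ⟨(n : Y), n.2⟩ * (⟨(g : Y), g.2⟩ : X₁)⁻¹ ∈
          X₂.subgroupOf X₁ := hnorm.conj_mem ⟨(n : Y), n.2⟩ hn2 ⟨(g : Y), g.2⟩
      exact this
    refine ⟨G₁, G₂, ?_, ?_, fun x hx => hle hx, hnrm, ?_⟩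
    · exact hc1.preimage continuous_subtype_val
    · exact hc2.preimage continuous_subtype_val
    · haveI := hnrm
      set f : G₁ →* X₁ := MonoidHom.mk' (fun g => ⟨(g : Y), g.2⟩) (fun a b => rfl) with hf
      set φ : G₁ →* S :=
        e.toMonoidHom.comp ((QuotientGroup.mk' (X₂.subgroupOf X₁)).comp f) with hφ
      have hsurj : Function.Surjective φ := by
        intro s
        have hq : e.symm s ∈ (Y.subgroupOf X₁).map (QuotientGroup.mk' (X₂.subgroupOf X₁)) := by
          rw [htop]; trivial
        obtain ⟨y, hyY, hyq⟩ := hq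
        refine ⟨⟨⟨(y : X), hyY⟩, y.2⟩, ?_⟩
        have hfy : f ⟨⟨(y : X), hyY⟩, y.2⟩ = y := Subtype.ext rfl
        simp only [hφ, MonoidHom.comp_apply, hfy, hyq]
        simp
      have hker : φ.ker = G₂.subgroupOf G₁ := by
        ext g
        simp only [hφ, MonoidHom.mem_ker, MonoidHom.comp_apply, QuotientGroup.mk'_apply,
          MulEquiv.coe_toMonoidHom, EmbeddingLike.map_eq_one_iff, QuotientGroup.eq_one_iff]
        rfl
      exact ⟨(QuotientGroup.quotientMulEquivOfEq hker.symm).trans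
        (QuotientGroup.quotientKerEquivOfSurjective φ hsurj)⟩
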